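/- Let n ≥ 1 and 0 ≤ δ′ < 1. Suppose that for each sign vector s ∈ {−1,1}ⁿ a point x_s ∈ ℝⁿ is given with s_j·(x_s)_j ≥ 1 − δ′ for every j = 1,…,n. Then the convex hull D = conv{x_s : s ∈ {−1,1}ⁿ} contains the cube (1−δ′)·B∞ⁿ. -/

import Mathlib

open MeasureTheory RealInnerProductSpace ENNReal Pointwise

noncomputable section

/-- The unit cube `B∞ⁿ = {x : |xᵢ| ≤ 1 ∀ i}`. -/
def cube (n : ℕ) : Set (EuclideanSpace ℝ (Fin n)) := {x | ∀ i, |x i| ≤ 1}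

/-- The sign `±1` associated with a boolean. -/
def sgn (b : Bool) : ℝ := if b then 1 else -1

/-- if for each sign vector `s ∈ {−1,1}ⁿ` a point `x_s` with
`s_j·(x_s)_j ≥ 1 − δ′` for all `j` is given, then
`conv{x_s} ⊇ (1−δ′)·B∞ⁿ`. -/
theorem corner_points_hull_contains_cube (n : ℕ) (hn : 1 ≤ n)
    (δ' : ℝ) (hδ'0 : 0 ≤ δ') (hδ'1 : δ' < 1)
    (x : (Fin n → Bool) → EuclideanSpace ℝ (Fin n))
    (hx : ∀ s : Fin n → Bool, ∀ j : Fin n, 1 - δ' ≤ sgn (s j) * x s j) :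
    (1 - δ') • cube n ⊆ convexHull ℝ (Set.range x) := by
  intro y hy
  obtain ⟨c, hc, rfl⟩ := hy
  set y : EuclideanSpace ℝ (Fin n) := (1 - δ') • c with hy_def
  have hpos : (0:ℝ) < 1 - δ' := by linarith
  have hybd : ∀ i, |y i| ≤ 1 - δ' := by
    intro i
    have : y i = (1 - δ') * c i := rfl
    rw [this, abs_mul, abs_of_pos hpos]
    nlinarith [hc i, abs_nonneg (c i)]
  -- Key claim by induction on a finset of "fixed" coordinates
  have key : ∀ T : Finset (Fin n),
      ∃ z : (Fin n → Bool) → EuclideanSpace ℝ (Fin n),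
        (∀ s, z s ∈ convexHull ℝ (Set.range x)) ∧
        (∀ s, ∀ j ∈ T, z s j = y j) ∧
        (∀ s, ∀ j, j ∉ T → 1 - δ' ≤ sgn (s j) * z s j) := by
    intro T
    induction T using Finset.induction_on with
    | empty =>
      exact ⟨x, fun s => subset_convexHull ℝ _ ⟨s, rfl⟩,
        fun s j hj => absurd hj (Finset.notMem_empty j),
        fun s j _ => hx s j⟩
    | @insert i T hiT ih =>
      obtain ⟨z, hz1, hz2, hz3⟩ := ih
      -- for each s, combine z (s[i:=true]) and z (s[i:=false])
      refine ⟨fun s =>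
        (let a := z (Function.update s i true) i
         let b := z (Function.update s i false) i
         let θ := (y i - b) / (a - b)
         θ • z (Function.update s i true) + (1 - θ) • z (Function.update s i false)),
        ?_, ?_, ?_⟩ <;> intro s
      all_goals
        simp only []
        set a := z (Function.update s i true) i with ha_def
        set b := z (Function.update s i false) i with hb_def
        have hai : (1:ℝ) - δ' ≤ a := by
          have := hz3 (Function.update s i true) i hiT
          simpa [sgn, Function.update_self] using this
        have hbi : b ≤ -(1 - δ') := by
          have := hz3 (Function.update s i false) i hiT
          simp only [sgn, Function.update_self, if_false] at this
          push_cast at this ⊢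
          linarith
        have hab : 0 < a - b := by linarith
        set θ := (y i - b) / (a - b) with hθ_def
        have hθ0 : 0 ≤ θ := by
          apply div_nonneg _ hab.le
          have := (abs_le.mp (hybd i)).1
          linarith
        have hθ1 : θ ≤ 1 := by
          rw [div_le_one hab]
          have := (abs_le.mp (hybd i)).2
          linarith
      · exact convex_convexHull ℝ _ (hz1 _) (hz1 _) hθ0 (by linarith) (by ring)
      · intro j hj
        rcases Finset.mem_insert.mp hj with rfl | hjT
        · have : (θ • z (Function.update s j true) + (1 - θ) • z (Function.update s j false)) j
              = θ * a + (1 - θ) * b := rfl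
          rw [this, hθ_def]
          field_simp
          ring
        · have h1 := hz2 (Function.update s i true) j hjT
          have h2 := hz2 (Function.update s i false) j hjT
          have : (θ • z (Function.update s i true) + (1 - θ) • z (Function.update s i false)) j
              = θ * z (Function.update s i true) j + (1 - θ) * z (Function.update s i false) j := rfl
          rw [this, h1, h2]; ring
      · intro j hj
        have hji : j ≠ i := fun h => hj (h ▸ Finset.mem_insert_self i T)
        have hjT : j ∉ T := fun h => hj (Finset.mem_insert_of_mem h)
        have h1 := hz3 (Function.update s i true) j hjT
        have h2 := hz3 (Function.update s i false) j hjT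
        rw [Function.update_of_ne hji] at h1 h2
        have : (θ • z (Function.update s i true) + (1 - θ) • z (Function.update s i false)) j
            = θ * z (Function.update s i true) j + (1 - θ) * z (Function.update s i false) j := rfl
        rw [this, mul_add]
        calc (1:ℝ) - δ' = θ * (1 - δ') + (1 - θ) * (1 - δ') := by ring
          _ ≤ θ * (sgn (s j) * z (Function.update s i true) j)
              + (1 - θ) * (sgn (s j) * z (Function.update s i false) j) := by
              gcongr <;> linarith
          _ = sgn (s j) * (θ * z (Function.update s i true) j)
              + sgn (s j) * ((1 - θ) * z (Function.update s i false) j) := by ring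
  obtain ⟨z, hz1, hz2, _⟩ := key Finset.univ
  have : z (fun _ => true) = y := by
    ext j
    exact hz2 _ j (Finset.mem_univ j)
  show y ∈ convexHull ℝ (Set.range x)
  exact this ▸ hz1 _
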